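/- Let X be a Polish space, ϱ a Radon measure on X, q ∈ (0,1) and f, g ∈ U. Then the splitting law of the Poisson point process evaluated on the exponential test function h = e^{−ζ_f} ⊗ e^{−ζ_g} equals a single Laplace transform of Π_ϱ: S_q(Π_ϱ)(e^{−ζ_f} ⊗ e^{−ζ_g}) = L_{Π_ϱ}(v), where v = g − log(1 − q + q e^{g−f}) = −log((1−q) e^{−g} + q e^{−f}) ∈ U. -/

import Mathlib

open MeasureTheory ENNReal

noncomputable section

namespace PoissonSplitting

variable {X : Type*} [MeasurableSpace X] [MetricSpace X]

/-- `expNeg a = e^{-a}` for an extended nonnegative real `a`. -/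
def expNeg (a : ℝ≥0∞) : ℝ≥0∞ := if a = ∞ then 0 else ENNReal.ofReal (Real.exp (-a.toReal))

/-- A (Radon) point measure on `X`: a locally finite countable sum of Dirac measures. -/
def IsPointMeasure (μ : Measure X) : Prop :=
  (∃ D : ℕ → Option X, μ = Measure.sum fun n => (D n).elim 0 Measure.dirac) ∧
    IsLocallyFiniteMeasure μ

/-- The class `U` of nonnegative bounded measurable functions on `X` whose support is
contained in some bounded set. -/
def MemU (f : X → ℝ) : Prop :=
  Measurable f ∧ (∀ x, 0 ≤ f x) ∧ (∃ C, ∀ x, f x ≤ C) ∧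
    Bornology.IsBounded (Function.support f)

/-- The pairing `ζ_f(ν) = ν(f)`, as an extended nonnegative real. -/
def pairing (f : X → ℝ) (ν : Measure X) : ℝ≥0∞ := ∫⁻ x, ENNReal.ofReal (f x) ∂ν

/-- The Laplace transform of a law `P` on measures: `L_P(f) = ∫ e^{-ν(f)} P(dν)`. -/
def laplaceT (P : Measure (Measure X)) (f : X → ℝ) : ℝ≥0∞ := ∫⁻ ν, expNeg (pairing f ν) ∂P

/-- `T` is the independent `q`-thinning `T^μ_q` of the point measure `μ`:
the probability law, supported on point-measure subconfigurations of `μ`, whose Laplace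
transform on test functions `f ∈ U` is
`T(e^{-ζ_f}) = ∏_{x∈μ}(1-q+q e^{-f(x)})^{μ({x})} = exp(∫ log(1-q+q e^{-f}) dμ)`. -/
def IsThinning (q : ℝ) (μ : Measure X) (T : Measure (Measure X)) : Prop :=
  IsProbabilityMeasure T ∧ (∀ᵐ ν ∂T, IsPointMeasure ν ∧ ν ≤ μ) ∧
    ∀ f : X → ℝ, MemU f →
      laplaceT T f =
        expNeg (∫⁻ x, ENNReal.ofReal (-Real.log (1 - q + q * Real.exp (-f x))) ∂μ)

/-- `P` is the Poisson point process `Π_ϱ` with intensity (first moment) measure `ϱ`: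
the point process with Laplace transform `L_P(f) = exp(-ϱ(1 - e^{-f}))`, `f ∈ U`. -/
def IsPoissonPP (ϱ : Measure X) (P : Measure (Measure X)) : Prop :=
  IsProbabilityMeasure P ∧ (∀ᵐ μ ∂P, IsPointMeasure μ) ∧
    ∀ f : X → ℝ, MemU f →
      laplaceT P f = expNeg (∫⁻ x, ENNReal.ofReal (1 - Real.exp (-f x)) ∂ϱ)

/-- A point process: a probability law on the point measures of `X`. -/
def IsPointProcess (P : Measure (Measure X)) : Prop :=
  IsProbabilityMeasure P ∧ ∀ᵐ μ ∂P, IsPointMeasure μ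

/-- The first moment (intensity) measure `ν_P` of a point process `P`:
`ν_P(B) = ∫ μ(B) P(dμ)`. -/
def momentMeasure (P : Measure (Measure X)) : Measure X := P.bind id

/-- `P` is of first order if its first moment measure is a Radon (locally finite) measure. -/
def IsFirstOrder (P : Measure (Measure X)) : Prop := IsLocallyFiniteMeasure (momentMeasure P)

end PoissonSplitting

open MeasureTheory ENNReal PoissonSplitting

section AuxLemmas

open Filter Topology PoissonSplitting

lemma expNeg_top : expNeg (⊤ : ℝ≥0∞) = 0 := by simp [expNeg]

lemma expNeg_of_ne_top {a : ℝ≥0∞} (h : a ≠ ⊤) :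
    expNeg a = ENNReal.ofReal (Real.exp (-a.toReal)) := by simp [expNeg, h]

lemma expNeg_zero : expNeg (0 : ℝ≥0∞) = 1 := by simp [expNeg]

lemma expNeg_le_one {a : ℝ≥0∞} : expNeg a ≤ 1 := by
  rcases eq_or_ne a ⊤ with h | h
  · simp [h, expNeg_top]
  · rw [expNeg_of_ne_top h]
    refine ENNReal.ofReal_le_one.2 (Real.exp_le_one_iff.2 ?_)
    simp [ENNReal.toReal_nonneg]

lemma expNeg_ne_top {a : ℝ≥0∞} : expNeg a ≠ ⊤ :=
  (lt_of_le_of_lt expNeg_le_one (by norm_num)).ne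

lemma expNeg_add {a b : ℝ≥0∞} : expNeg (a + b) = expNeg a * expNeg b := by
  rcases eq_or_ne a ⊤ with h | h
  · simp [h, expNeg_top]
  rcases eq_or_ne b ⊤ with h' | h'
  · simp [h', expNeg_top]
  rw [expNeg_of_ne_top h, expNeg_of_ne_top h', expNeg_of_ne_top (by finiteness),
    ENNReal.toReal_add h h', neg_add, Real.exp_add,
    ENNReal.ofReal_mul (Real.exp_nonneg _)]

lemma expNeg_anti : Antitone expNeg := by
  intro a b hab
  rcases eq_or_ne b ⊤ with h | h
  · simp [h, expNeg_top]
  have ha : a ≠ ⊤ := (lt_of_le_of_lt hab h.lt_top).ne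
  rw [expNeg_of_ne_top h, expNeg_of_ne_top ha]
  exact ENNReal.ofReal_le_ofReal (Real.exp_le_exp.2 (by
    simp only [neg_le_neg_iff]
    exact ENNReal.toReal_le_toReal ha h |>.2 hab))

lemma measurable_expNeg : Measurable expNeg := by
  have h : Measurable fun a : ℝ≥0∞ => ENNReal.ofReal (Real.exp (-a.toReal)) :=
    ENNReal.measurable_ofReal.comp (ENNReal.measurable_toReal.neg.exp)
  exact Measurable.ite (measurableSet_singleton ⊤) measurable_const h

lemma expNeg_sum {ι : Type*} (s : Finset ι) (a : ι → ℝ≥0∞) :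
    expNeg (∑ i ∈ s, a i) = ∏ i ∈ s, expNeg (a i) := by
  classical
  induction s using Finset.induction_on with
  | empty => simp [expNeg_zero]
  | insert x s hx ih => simp [Finset.sum_insert hx, Finset.prod_insert hx, expNeg_add, ih]

lemma tendsto_expNeg_nhds {α : Type*} {l : Filter α} {m : α → ℝ≥0∞} {x : ℝ≥0∞}
    (hm : Filter.Tendsto m l (𝓝 x)) (hx : x ≠ ⊤) :
    Filter.Tendsto (fun a => expNeg (m a)) l (𝓝 (expNeg x)) := by
  have hev : ∀ᶠ a in l, m a ≠ ⊤ := by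
    filter_upwards [hm.eventually (isOpen_Iio.mem_nhds hx.lt_top)] with a ha
    exact LT.lt.ne ha
  have h2 : Filter.Tendsto (fun a => ENNReal.ofReal (Real.exp (-(m a).toReal))) l
      (𝓝 (ENNReal.ofReal (Real.exp (-x.toReal)))) :=
    (ENNReal.continuous_ofReal.tendsto _).comp
      ((Real.continuous_exp.tendsto _).comp (((ENNReal.tendsto_toReal hx).comp hm).neg))
  rw [expNeg_of_ne_top hx]
  refine h2.congr' ?_
  filter_upwards [hev] with a ha
  rw [expNeg_of_ne_top ha]

lemma tendsto_expNeg_iSup {a : ℕ → ℝ≥0∞} (ha : Monotone a) :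
    Filter.Tendsto (fun n => expNeg (a n)) Filter.atTop (𝓝 (expNeg (⨆ n, a n))) := by
  rcases eq_or_ne (⨆ n, a n) ⊤ with h | h
  · rw [h, expNeg_top]
    have hanti : Antitone fun n => expNeg (a n) := fun m n hmn => expNeg_anti (ha hmn)
    have h1 := tendsto_atTop_iInf hanti
    suffices h0 : (⨅ n, expNeg (a n)) = 0 by rwa [h0] at h1
    by_contra h0
    have hfin : (⨅ n, expNeg (a n)) ≠ ⊤ :=
      (lt_of_le_of_lt (le_trans (iInf_le (fun n => expNeg (a n)) 0) expNeg_le_one) (by norm_num)).ne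
    have hcpos : 0 < (⨅ n, expNeg (a n)).toReal := ENNReal.toReal_pos h0 hfin
    obtain ⟨M, hM⟩ := exists_nat_one_div_lt hcpos
    have htop : ((M + 1 : ℕ) : ℝ≥0∞) < ⨆ n, a n := by
      rw [h]; exact ENNReal.natCast_lt_top _
    obtain ⟨n, hn⟩ := lt_iSup_iff.1 htop
    have hle : expNeg (a n) ≤ ENNReal.ofReal (Real.exp (-((M + 1 : ℕ) : ℝ))) := by
      rcases eq_or_ne (a n) ⊤ with h' | h'
      · simp [h', expNeg_top]
      · rw [expNeg_of_ne_top h']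
        apply ENNReal.ofReal_le_ofReal
        apply Real.exp_le_exp.2
        have h3 : ((M + 1 : ℕ) : ℝ) ≤ (a n).toReal := by
          have := (ENNReal.toReal_le_toReal (by simp) h').2 hn.le
          rwa [ENNReal.toReal_natCast] at this
        linarith
    have hexp : Real.exp (-((M + 1 : ℕ) : ℝ)) < (⨅ n, expNeg (a n)).toReal := by
      refine lt_of_le_of_lt ?_ hM
      rw [Real.exp_neg, inv_eq_one_div]
      apply div_le_div_of_nonneg_left (by norm_num) (by positivity)
      have h4 := Real.add_one_le_exp ((M + 1 : ℕ) : ℝ)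
      push_cast at h4 ⊢
      linarith
    have hlt : ENNReal.ofReal (Real.exp (-((M + 1 : ℕ) : ℝ))) < ⨅ n, expNeg (a n) := by
      rw [← ENNReal.ofReal_toReal hfin]
      exact (ENNReal.ofReal_lt_ofReal_iff (by positivity)).2 hexp
    exact absurd (le_trans (iInf_le (fun n => expNeg (a n)) n) hle) hlt.not_ge
  · exact tendsto_expNeg_nhds (tendsto_atTop_iSup ha) h

lemma measurable_pairing {X : Type*} [MeasurableSpace X] {f : X → ℝ} (hf : Measurable f) :
    Measurable (pairing f : Measure X → ℝ≥0∞) :=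
  Measure.measurable_lintegral (ENNReal.measurable_ofReal.comp hf)

end AuxLemmas

section AuxPoint

open Filter Topology PoissonSplitting

variable {X : Type*} [MeasurableSpace X]

lemma PoissonSplitting.MemU.indicator {X : Type*} [MeasurableSpace X] [MetricSpace X] {f : X → ℝ}
    (hf : MemU f) {A : Set X} (hA : MeasurableSet A) : MemU (A.indicator f) := by
  obtain ⟨hm, h0, ⟨C, hC⟩, hb⟩ := hf
  refine ⟨hm.indicator hA, fun x => Set.indicator_nonneg (fun y _ => h0 y) x,
    ⟨max C 0, fun x => ?_⟩, ?_⟩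
  · by_cases hx : x ∈ A
    · rw [Set.indicator_of_mem hx]; exact le_max_of_le_left (hC x)
    · rw [Set.indicator_of_notMem hx]; exact le_max_right _ _
  · refine hb.subset fun x hx => ?_
    exact Set.inter_subset_right (Set.indicator_apply_ne_zero.1 hx)

/-- Structure of a point measure on a set of finite measure. -/
lemma pointMeasure_finset {μ : Measure X} {D : ℕ → Option X}
    (hD : μ = Measure.sum fun n => (D n).elim 0 Measure.dirac)
    {A : Set X} (hA : MeasurableSet A) (hfin : μ A ≠ ⊤) :
    ∃ I : Finset ℕ, μ A = I.card ∧ (∀ n ∈ I, ∃ x, D n = some x ∧ x ∈ A) ∧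
      ∀ φ : X → ℝ≥0∞, Measurable φ → (∀ x ∉ A, φ x = 0) →
        ∫⁻ x, φ x ∂μ = ∑ n ∈ I, (D n).elim 0 φ := by
  classical
  set m : ℕ → Measure X := fun n => (D n).elim 0 Measure.dirac with hm
  have happ : ∀ n, m n A = if h : ∃ x, D n = some x ∧ x ∈ A then 1 else 0 := by
    intro n
    cases hDn : D n with
    | none => simp [hm, hDn]
    | some x =>
      by_cases hx : x ∈ A
      · simp [hm, hDn, Measure.dirac_apply' x hA, Set.indicator_of_mem hx, hx]
      · simp [hm, hDn, Measure.dirac_apply' x hA, Set.indicator_of_notMem hx, hx]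
  have hμA : μ A = ∑' n, m n A := by rw [hD, Measure.sum_apply _ hA]
  set S : Set ℕ := {n | ∃ x, D n = some x ∧ x ∈ A} with hS
  have hSfin : S.Finite := by
    by_contra hinf
    have hall : ∀ k : ℕ, (k : ℝ≥0∞) ≤ μ A := by
      intro k
      obtain ⟨t, htS, htc⟩ := (show S.Infinite from hinf).exists_subset_card_eq k
      have : ∑ n ∈ t, m n A = k := by
        rw [← htc, Finset.card_eq_sum_ones, Nat.cast_sum]
        refine Finset.sum_congr rfl fun n hn => ?_
        rw [happ n, dif_pos (show ∃ x, D n = some x ∧ x ∈ A from htS hn)]; simp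
      calc (k : ℝ≥0∞) = ∑ n ∈ t, m n A := this.symm
        _ ≤ ∑' n, m n A := ENNReal.sum_le_tsum t
        _ = μ A := hμA.symm
    have htop : (⊤ : ℝ≥0∞) ≤ μ A := by
      rw [← ENNReal.iSup_natCast]; exact iSup_le hall
    exact hfin (top_le_iff.1 htop)
  refine ⟨hSfin.toFinset, ?_, ?_, ?_⟩
  · rw [hμA, tsum_eq_sum (s := hSfin.toFinset) ?side]
    · rw [Finset.card_eq_sum_ones, Nat.cast_sum]
      refine Finset.sum_congr rfl fun n hn => ?_
      rw [happ n, dif_pos (show ∃ x, D n = some x ∧ x ∈ A from hSfin.mem_toFinset.1 hn)]; simp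
    case side =>
      intro n hn
      have hn' : ¬ ∃ x, D n = some x ∧ x ∈ A := fun hmem => hn (hSfin.mem_toFinset.2 hmem)
      rw [happ n, dif_neg hn']
  · intro n hn; exact hSfin.mem_toFinset.1 hn
  · intro φ hφ hφA
    have hterm : ∀ n, ∫⁻ x, φ x ∂(m n) = (D n).elim 0 φ := by
      intro n
      cases hDn : D n with
      | none => simp [hm, hDn]
      | some x => simp [hm, hDn, lintegral_dirac' x hφ]
    rw [hD, lintegral_sum_measure]
    rw [tsum_eq_sum (s := hSfin.toFinset) ?side2]
    · exact Finset.sum_congr rfl fun n _ => hterm n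
    case side2 =>
      intro n hn
      rw [hterm n]
      cases hDn : D n with
      | none => simp
      | some x =>
        simp only [Option.elim]
        apply hφA
        intro hx
        have hn' : n ∉ S := fun hmem => hn (hSfin.mem_toFinset.2 hmem)
        exact hn' ⟨x, hDn, hx⟩

end AuxPoint

section AuxV

open Filter Topology PoissonSplitting

/-- The combined test function `v = -log((1-q)e^{-g} + q e^{-f})`. -/
def vOf {X : Type*} (q : ℝ) (f g : X → ℝ) (x : X) : ℝ :=
  -Real.log ((1 - q) * Real.exp (-(g x)) + q * Real.exp (-(f x)))

lemma vArg_pos {q a b : ℝ} (hq0 : 0 < q) (hq1 : q < 1) :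
    0 < (1 - q) * Real.exp (-b) + q * Real.exp (-a) := by
  have h1 := Real.exp_pos (-b); have h2 := Real.exp_pos (-a); nlinarith

lemma vArg_le_one {q a b : ℝ} (hq0 : 0 < q) (hq1 : q < 1) (ha : 0 ≤ a) (hb : 0 ≤ b) :
    (1 - q) * Real.exp (-b) + q * Real.exp (-a) ≤ 1 := by
  have h1 : Real.exp (-b) ≤ 1 := Real.exp_le_one_iff.2 (neg_nonpos.2 hb)
  have h2 : Real.exp (-a) ≤ 1 := Real.exp_le_one_iff.2 (neg_nonpos.2 ha)
  nlinarith

lemma vOf_nonneg {X : Type*} {q : ℝ} (hq0 : 0 < q) (hq1 : q < 1) {f g : X → ℝ}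
    (hf : ∀ x, 0 ≤ f x) (hg : ∀ x, 0 ≤ g x) (x : X) : 0 ≤ vOf q f g x := by
  have := Real.log_nonpos (le_of_lt (vArg_pos hq0 hq1)) (vArg_le_one hq0 hq1 (hf x) (hg x))
  simp only [vOf]; linarith

lemma vOf_zero {X : Type*} {q : ℝ} {f g : X → ℝ} {x : X} (hfx : f x = 0) (hgx : g x = 0) :
    vOf q f g x = 0 := by simp [vOf, hfx, hgx]

lemma vOf_measurable {X : Type*} [MeasurableSpace X] {q : ℝ} {f g : X → ℝ}
    (hf : Measurable f) (hg : Measurable g) : Measurable (vOf q f g) :=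
  (((measurable_const.mul hg.neg.exp).add (measurable_const.mul hf.neg.exp)).log).neg

lemma vOf_mono {q a b a' b' : ℝ} (hq0 : 0 < q) (hq1 : q < 1)
    (haa : a ≤ a') (hbb : b ≤ b') :
    -Real.log ((1 - q) * Real.exp (-b) + q * Real.exp (-a))
      ≤ -Real.log ((1 - q) * Real.exp (-b') + q * Real.exp (-a')) := by
  have harg : (1 - q) * Real.exp (-b') + q * Real.exp (-a')
      ≤ (1 - q) * Real.exp (-b) + q * Real.exp (-a) := by
    have h1 : Real.exp (-b') ≤ Real.exp (-b) := Real.exp_le_exp.2 (by linarith)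
    have h2 : Real.exp (-a') ≤ Real.exp (-a) := Real.exp_le_exp.2 (by linarith)
    nlinarith
  have := Real.log_le_log (vArg_pos hq0 hq1 (a := a') (b := b')) harg
  linarith

lemma memU_vOf {X : Type*} [MeasurableSpace X] [MetricSpace X] {q : ℝ}
    (hq0 : 0 < q) (hq1 : q < 1) {f g : X → ℝ} (hf : MemU f) (hg : MemU g) :
    MemU (vOf q f g) := by
  obtain ⟨hfm, hf0, ⟨Cf, hCf⟩, hfb⟩ := hf
  obtain ⟨hgm, hg0, ⟨Cg, hCg⟩, hgb⟩ := hg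
  refine ⟨vOf_measurable hfm hgm, vOf_nonneg hq0 hq1 hf0 hg0, ?_, ?_⟩
  · refine ⟨-Real.log ((1 - q) * Real.exp (-(max Cg 0)) + q * Real.exp (-(max Cf 0))),
      fun x => ?_⟩
    have harg : (1 - q) * Real.exp (-(max Cg 0)) + q * Real.exp (-(max Cf 0))
        ≤ (1 - q) * Real.exp (-(g x)) + q * Real.exp (-(f x)) := by
      have h1 : Real.exp (-(max Cg 0)) ≤ Real.exp (-(g x)) :=
        Real.exp_le_exp.2 (by have := hCg x; have := le_max_left Cg 0; linarith)
      have h2 : Real.exp (-(max Cf 0)) ≤ Real.exp (-(f x)) :=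
        Real.exp_le_exp.2 (by have := hCf x; have := le_max_left Cf 0; linarith)
      nlinarith
    have := Real.log_le_log (vArg_pos hq0 hq1 (a := max Cf 0) (b := max Cg 0)) harg
    simp only [vOf]; linarith
  · refine (hfb.union hgb).subset fun x hx => ?_
    by_contra hx'
    simp only [Set.mem_union, Function.mem_support, not_or, not_not] at hx'
    exact hx (vOf_zero hx'.1 hx'.2)

lemma vOf_eq_alt {q a b : ℝ} (hq0 : 0 < q) (hq1 : q < 1) :
    -Real.log ((1 - q) * Real.exp (-b) + q * Real.exp (-a))
      = b - Real.log (1 - q + q * Real.exp (b - a)) := by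
  have h2 : Real.exp (-b) * Real.exp (b - a) = Real.exp (-a) := by
    rw [← Real.exp_add]; congr 1; ring
  have hpos : 0 < 1 - q + q * Real.exp (b - a) := by
    have := Real.exp_pos (b - a); nlinarith
  have h1 : (1 - q) * Real.exp (-b) + q * Real.exp (-a)
      = Real.exp (-b) * (1 - q + q * Real.exp (b - a)) := by
    rw [mul_add, mul_comm (Real.exp (-b)) (1 - q)]
    rw [show Real.exp (-b) * (q * Real.exp (b - a)) = q * (Real.exp (-b) * Real.exp (b - a)) by
      ring, h2]
  rw [h1, Real.log_mul (Real.exp_ne_zero _) (ne_of_gt hpos), Real.log_exp]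
  ring

end AuxV

section AuxPoisson

open Filter Topology PoissonSplitting

lemma poisson_ae_finite {X : Type*} [MeasurableSpace X] [MetricSpace X]
    {ϱ : Measure X} {P : Measure (Measure X)} (hP : IsPoissonPP ϱ P)
    {B : Set X} (hB : MeasurableSet B) (hBb : Bornology.IsBounded B) (hϱB : ϱ B ≠ ⊤) :
    ∀ᵐ μ ∂P, μ B ≠ ⊤ := by
  haveI := hP.1
  set u : ℕ → X → ℝ := fun m => B.indicator (fun _ => 1 / (m + 1 : ℝ)) with hu
  have humemU : ∀ m, MemU (u m) := by
    intro m
    refine ⟨measurable_const.indicator hB, fun x => Set.indicator_nonneg (fun _ _ => by positivity) x,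
      ⟨1 / (m + 1 : ℝ), fun x => ?_⟩, ?_⟩
    · by_cases hx : x ∈ B
      · simp [hu, hx]
      · simp [hu, hx]; positivity
    · refine hBb.subset fun x hx => ?_
      exact Set.inter_subset_left (Set.indicator_apply_ne_zero.1 hx)
  have hpair : ∀ m (μ : Measure X),
      pairing (u m) μ = ENNReal.ofReal (1 / (m + 1 : ℝ)) * μ B := by
    intro m μ
    have : ∀ x, ENNReal.ofReal (u m x)
        = B.indicator (fun _ => ENNReal.ofReal (1 / (m + 1 : ℝ))) x := by
      intro x
      by_cases hx : x ∈ B <;> simp [hu, hx]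
    simp only [pairing, this]
    rw [lintegral_indicator_const hB]
  have hlap := fun m => hP.2.2 (u m) (humemU m)
  -- LHS limit
  have hSmeas : MeasurableSet {μ : Measure X | μ B ≠ ⊤} := by
    exact (Measure.measurable_coe hB (measurableSet_singleton ⊤)).compl
  have hLHS : Tendsto (fun m => ∫⁻ μ, expNeg (pairing (u m) μ) ∂P) atTop
      (𝓝 (P {μ : Measure X | μ B ≠ ⊤})) := by
    have hlim : ∀ μ : Measure X, Tendsto (fun m => expNeg (pairing (u m) μ)) atTop
        (𝓝 ({μ : Measure X | μ B ≠ ⊤}.indicator 1 μ)) := by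
      intro μ
      by_cases hfin : μ B = ⊤
      · have : ∀ m, expNeg (pairing (u m) μ) = 0 := by
          intro m
          rw [hpair, hfin, ENNReal.mul_top (ne_of_gt (ENNReal.ofReal_pos.2 (by positivity))),
            expNeg_top]
        rw [Set.indicator_of_notMem (by simp [hfin])]
        simp only [this]; exact tendsto_const_nhds
      · have h1 : Tendsto (fun m : ℕ => ENNReal.ofReal (1 / (m + 1 : ℝ)) * μ B) atTop (𝓝 0) := by
          have h2 : Tendsto (fun m : ℕ => ENNReal.ofReal (1 / (m + 1 : ℝ))) atTop (𝓝 0) := by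
            rw [show (0 : ℝ≥0∞) = ENNReal.ofReal 0 by simp]
            exact (ENNReal.continuous_ofReal.tendsto _).comp
              tendsto_one_div_add_atTop_nhds_zero_nat
          simpa using ENNReal.Tendsto.mul_const h2 (Or.inr hfin)
        rw [Set.indicator_of_mem (by exact hfin) 1]
        have := tendsto_expNeg_nhds (by simpa only [hpair] using h1 :
          Tendsto (fun m => pairing (u m) μ) atTop (𝓝 0)) (by simp)
        simpa [expNeg_zero] using this
    have hbound : ∀ m, (fun μ => expNeg (pairing (u m) μ)) ≤ᵐ[P] fun _ => 1 :=
      fun m => Filter.Eventually.of_forall fun μ => expNeg_le_one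
    have := tendsto_lintegral_of_dominated_convergence (fun _ => (1 : ℝ≥0∞))
      (fun m => measurable_expNeg.comp (measurable_pairing (humemU m).1))
      hbound (by simp) (Filter.Eventually.of_forall hlim)
    rwa [lintegral_indicator_one hSmeas] at this
  -- RHS limit
  have hRHS : Tendsto (fun m =>
      expNeg (∫⁻ x, ENNReal.ofReal (1 - Real.exp (-(u m x))) ∂ϱ)) atTop (𝓝 1) := by
    have hval : ∀ m, ∫⁻ x, ENNReal.ofReal (1 - Real.exp (-(u m x))) ∂ϱ
        = ENNReal.ofReal (1 - Real.exp (-(1 / (m + 1 : ℝ)))) * ϱ B := by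
      intro m
      have : ∀ x, ENNReal.ofReal (1 - Real.exp (-(u m x)))
          = B.indicator (fun _ => ENNReal.ofReal (1 - Real.exp (-(1 / (m + 1 : ℝ))))) x := by
        intro x
        by_cases hx : x ∈ B <;> simp [hu, hx]
      simp only [this]
      rw [lintegral_indicator_const hB]
    have h2 : Tendsto (fun m : ℕ => ENNReal.ofReal (1 - Real.exp (-(1 / (m + 1 : ℝ)))))
        atTop (𝓝 0) := by
      rw [show (0 : ℝ≥0∞) = ENNReal.ofReal (1 - Real.exp (-(0:ℝ))) by simp]
      refine (ENNReal.continuous_ofReal.tendsto _).comp ?_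
      have : Tendsto (fun m : ℕ => 1 / (m + 1 : ℝ)) atTop (𝓝 0) :=
        tendsto_one_div_add_atTop_nhds_zero_nat
      exact (((Real.continuous_exp.tendsto _).comp this.neg).const_sub 1)
    have h3 : Tendsto (fun m : ℕ => ENNReal.ofReal (1 - Real.exp (-(1 / (m + 1 : ℝ)))) * ϱ B)
        atTop (𝓝 0) := by simpa using ENNReal.Tendsto.mul_const h2 (Or.inr hϱB)
    have := tendsto_expNeg_nhds (by simpa only [hval] using h3 :
      Tendsto (fun m => ∫⁻ x, ENNReal.ofReal (1 - Real.exp (-(u m x))) ∂ϱ) atTop (𝓝 0))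
      (by simp)
    simpa [expNeg_zero] using this
  have heq : P {μ : Measure X | μ B ≠ ⊤} = 1 := by
    refine tendsto_nhds_unique ?_ hRHS
    refine hLHS.congr fun m => ?_
    exact (hlap m)
  rw [Filter.eventually_iff, mem_ae_iff]
  have : {μ : Measure X | μ B ≠ ⊤}ᶜ = {μ : Measure X | ¬ μ B ≠ ⊤} := rfl
  rw [show {μ : Measure X | μ B ≠ ⊤}ᶜ = {μ : Measure X | μ B ≠ ⊤}ᶜ from rfl]
  rw [measure_compl hSmeas (by simp)]
  simp [heq]

end AuxPoisson

section KeyFin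

open Filter Topology PoissonSplitting

lemma vArg_factor (q a b : ℝ) :
    (1 - q) * Real.exp (-b) + q * Real.exp (-a)
      = Real.exp (-b) * (1 - q + q * Real.exp (b - a)) := by
  have h2 : Real.exp (-b) * Real.exp (b - a) = Real.exp (-a) := by
    rw [← Real.exp_add]; congr 1; ring
  linear_combination (-q) * h2

lemma key_fin {X : Type*} [MeasurableSpace X] [MetricSpace X]
    {q : ℝ} (hq0 : 0 < q) (hq1 : q < 1) {f g : X → ℝ} (hf : MemU f) (hg : MemU g)
    {A : Set X} (hA : MeasurableSet A) (hAb : Bornology.IsBounded A)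
    (hfA : ∀ x ∉ A, f x = 0) (hgA : ∀ x ∉ A, g x = 0)
    {μ : Measure X} (hμ : IsPointMeasure μ) (hμA : μ A ≠ ⊤)
    {T' : Measure (Measure X)} (hT' : IsThinning q μ T') :
    ∫⁻ ν, expNeg (pairing f ν) * expNeg (pairing g (μ - ν)) ∂T'
      = expNeg (pairing (vOf q f g) μ) := by
  classical
  obtain ⟨hTprob, hTae, hTlap⟩ := hT'
  rcases isEmpty_or_nonempty X with hX | hX
  · have hz : ∀ (m : Measure X) (φ : X → ℝ≥0∞), ∫⁻ x, φ x ∂m = 0 := by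
      intro m φ; rw [Measure.eq_zero_of_isEmpty m]; simp
    have h1 : ∀ ν : Measure X, expNeg (pairing f ν) * expNeg (pairing g (μ - ν)) = 1 := by
      intro ν; simp only [pairing, hz, expNeg_zero, one_mul]
    rw [lintegral_congr h1, lintegral_one, hTprob.measure_univ]
    simp only [pairing, hz, expNeg_zero]
  -- nonempty case
  obtain ⟨⟨D, hD⟩, -⟩ := hμ
  obtain ⟨I, hcard, hmem, hint⟩ := pointMeasure_finset hD hA hμA
  set e : ℕ → X := fun n => (D n).getD (Classical.arbitrary X) with he
  have heI : ∀ n ∈ I, D n = some (e n) ∧ e n ∈ A := by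
    intro n hn; obtain ⟨x, hx1, hx2⟩ := hmem n hn
    refine ⟨?_, ?_⟩
    · rw [hx1]; simp [he, hx1]
    · simpa [he, hx1] using hx2
  have hint' : ∀ φ : X → ℝ≥0∞, Measurable φ → (∀ x ∉ A, φ x = 0) →
      ∫⁻ x, φ x ∂μ = ∑ n ∈ I, φ (e n) := by
    intro φ h1 h2
    rw [hint φ h1 h2]
    exact Finset.sum_congr rfl fun n hn => by rw [(heI n hn).1, Option.elim_some]
  set K := I.card with hK
  -- bounds on f and g
  obtain ⟨Cg0, hCg0⟩ := hg.2.2.1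
  set Cg : ℝ := max Cg0 0 with hCgdef
  have hCg : ∀ x, g x ≤ Cg := fun x => le_max_of_le_left (hCg0 x)
  have hCgnn : (0:ℝ) ≤ Cg := le_max_right _ _
  obtain ⟨Cf0, hCf0⟩ := hf.2.2.1
  set Cf : ℝ := max Cf0 0 with hCfdef
  have hCf : ∀ x, f x ≤ Cf := fun x => le_max_of_le_left (hCf0 x)
  -- measurable functionals
  have hPfm : Measurable (pairing f) := measurable_pairing hf.1
  have hPgm : Measurable (pairing g) := measurable_pairing hg.1
  have hNAm : Measurable fun ν : Measure X => ν A := Measure.measurable_coe hA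
  set W : Measure X → ℝ :=
    fun ν => Real.exp ((pairing g ν).toReal - (pairing f ν).toReal) with hW
  have hWm : Measurable W :=
    ((ENNReal.measurable_toReal.comp hPgm).sub (ENNReal.measurable_toReal.comp hPfm)).exp
  -- uniform bounds on pairings
  have hgbound : ∀ m : Measure X, pairing g m ≤ ENNReal.ofReal Cg * m A := by
    intro m
    have hpt : ∀ x, ENNReal.ofReal (g x) ≤ A.indicator (fun _ => ENNReal.ofReal Cg) x := by
      intro x; by_cases hx : x ∈ A
      · simpa [hx] using ENNReal.ofReal_le_ofReal (hCg x)
      · simp [hx, hgA x hx]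
    calc pairing g m ≤ ∫⁻ x, A.indicator (fun _ => ENNReal.ofReal Cg) x ∂m :=
          lintegral_mono hpt
      _ = ENNReal.ofReal Cg * m A := lintegral_indicator_const hA _
  have hfbound : ∀ m : Measure X, pairing f m ≤ ENNReal.ofReal Cf * m A := by
    intro m
    have hpt : ∀ x, ENNReal.ofReal (f x) ≤ A.indicator (fun _ => ENNReal.ofReal Cf) x := by
      intro x; by_cases hx : x ∈ A
      · simpa [hx] using ENNReal.ofReal_le_ofReal (hCf x)
      · simp [hx, hfA x hx]
    calc pairing f m ≤ ∫⁻ x, A.indicator (fun _ => ENNReal.ofReal Cf) x ∂m :=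
          lintegral_mono hpt
      _ = ENNReal.ofReal Cf * m A := lintegral_indicator_const hA _
  -- a.e. properties of the thinned configuration
  have hgood : ∀ᵐ ν ∂T', (∃ k : ℕ, ν A = (k : ℝ≥0∞) ∧ k ≤ K) ∧ pairing f ν ≠ ⊤ ∧
      pairing g ν ≠ ⊤ ∧ (pairing g ν).toReal ≤ Cg * K ∧
      pairing g ν ≤ pairing g μ ∧
      pairing g (μ - ν) = pairing g μ - pairing g ν := by
    filter_upwards [hTae] with ν hν
    obtain ⟨hνpm, hνle⟩ := hν
    have hνA_le : ν A ≤ μ A := hνle A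
    have hνA : ν A ≠ ⊤ := (lt_of_le_of_lt hνA_le hμA.lt_top).ne
    obtain ⟨⟨Dν, hDν⟩, -⟩ := hνpm
    obtain ⟨Iν, hcardν, -, -⟩ := pointMeasure_finset hDν hA hνA
    have hkK : Iν.card ≤ K := by
      have h5 : ((Iν.card : ℕ) : ℝ≥0∞) ≤ ((K : ℕ) : ℝ≥0∞) := by
        rw [← hcardν, ← hcard]; exact hνA_le
      exact_mod_cast h5
    have hPfν : pairing f ν ≠ ⊤ :=
      (lt_of_le_of_lt (hfbound ν) (ENNReal.mul_lt_top ENNReal.ofReal_lt_top hνA.lt_top)).ne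
    have hPgν : pairing g ν ≠ ⊤ :=
      (lt_of_le_of_lt (hgbound ν) (ENNReal.mul_lt_top ENNReal.ofReal_lt_top hνA.lt_top)).ne
    have hPgνR : (pairing g ν).toReal ≤ Cg * K := by
      have h1 : pairing g ν ≤ ENNReal.ofReal Cg * ((K : ℕ) : ℝ≥0∞) := by
        refine (hgbound ν).trans (mul_le_mul_right ?_ _)
        rw [← hcard]; exact hνA_le
      have h2 : (ENNReal.ofReal Cg * ((K : ℕ) : ℝ≥0∞)).toReal = Cg * K := by
        rw [ENNReal.toReal_mul, ENNReal.toReal_ofReal hCgnn]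
        simp
      exact (ENNReal.toReal_mono (by finiteness) h1).trans h2.le
    have hres : ∀ m : Measure X, pairing g m = ∫⁻ x, ENNReal.ofReal (g x) ∂(m.restrict A) := by
      intro m
      rw [← lintegral_indicator hA]
      refine lintegral_congr fun x => ?_
      by_cases hx : x ∈ A
      · rw [Set.indicator_of_mem hx]
      · rw [Set.indicator_of_notMem hx, hgA x hx]; simp
    haveI : IsFiniteMeasure (ν.restrict A) :=
      ⟨by rw [Measure.restrict_apply_univ]; exact lt_of_le_of_lt hνA_le hμA.lt_top⟩
    have hsub : pairing g μ = pairing g (μ - ν) + pairing g ν := by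
      have h3 : (μ - ν).restrict A = μ.restrict A - ν.restrict A :=
        Measure.restrict_sub_eq_restrict_sub_restrict hA
      have h4 : ν.restrict A ≤ μ.restrict A :=
        Measure.restrict_mono (subset_refl A) hνle
      have h5 : (μ.restrict A - ν.restrict A) + ν.restrict A = μ.restrict A :=
        Measure.sub_add_cancel_of_le h4
      calc pairing g μ = ∫⁻ x, ENNReal.ofReal (g x) ∂(μ.restrict A) := hres μ
        _ = ∫⁻ x, ENNReal.ofReal (g x) ∂((μ.restrict A - ν.restrict A) + ν.restrict A) := by
            rw [h5]
        _ = ∫⁻ x, ENNReal.ofReal (g x) ∂(μ.restrict A - ν.restrict A)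
              + ∫⁻ x, ENNReal.ofReal (g x) ∂(ν.restrict A) := lintegral_add_measure _ _ _
        _ = pairing g (μ - ν) + pairing g ν := by rw [← h3, ← hres ν, ← hres (μ - ν)]
    refine ⟨⟨Iν.card, hcardν, hkK⟩, hPfν, hPgν, hPgνR, ?_,
      (ENNReal.sub_eq_of_eq_add hPgν hsub).symm⟩
    rw [hsub]; exact le_add_self
  -- events by the number of points in A
  set Ek : ℕ → Set (Measure X) := fun k => {ν | ν A = (k : ℝ≥0∞)} with hEk
  have hEkm : ∀ k, MeasurableSet (Ek k) := fun k => hNAm (measurableSet_singleton _)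
  set c : ℕ → ℝ≥0∞ := fun k => ∫⁻ ν in Ek k, ENNReal.ofReal (W ν) ∂T' with hc
  have hcfin : ∀ k, c k ≠ ⊤ := by
    intro k
    have hb : c k ≤ ENNReal.ofReal (Real.exp (Cg * K)) * T' (Ek k) := by
      rw [hc]
      calc ∫⁻ ν in Ek k, ENNReal.ofReal (W ν) ∂T'
          ≤ ∫⁻ _ in Ek k, ENNReal.ofReal (Real.exp (Cg * K)) ∂T' := by
            refine lintegral_mono_ae (ae_restrict_of_ae ?_)
            filter_upwards [hgood] with ν hν
            refine ENNReal.ofReal_le_ofReal ?_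
            show Real.exp ((pairing g ν).toReal - (pairing f ν).toReal)
              ≤ Real.exp (Cg * K)
            refine Real.exp_le_exp.2 ?_
            have h6 := hν.2.2.2.1
            have h7 := ENNReal.toReal_nonneg (a := pairing f ν)
            linarith
        _ = ENNReal.ofReal (Real.exp (Cg * K)) * T' (Ek k) := setLIntegral_const _ _
    exact (lt_of_le_of_lt hb (ENNReal.mul_lt_top ENNReal.ofReal_lt_top
      (measure_lt_top T' _))).ne
  -- the canonical integrand
  set F : ℝ → Measure X → ℝ≥0∞ := fun z ν => ∑ k ∈ Finset.range (K + 1),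
      (Ek k).indicator (fun ν' => ENNReal.ofReal (z ^ k) * ENNReal.ofReal (W ν')) ν with hF
  have hFsplit : ∀ z : ℝ,
      ∫⁻ ν, F z ν ∂T' = ∑ k ∈ Finset.range (K + 1), ENNReal.ofReal (z ^ k) * c k := by
    intro z
    rw [show (fun ν => F z ν) = fun ν => ∑ k ∈ Finset.range (K + 1),
        (Ek k).indicator (fun ν' => ENNReal.ofReal (z ^ k) * ENNReal.ofReal (W ν')) ν
      from rfl]
    rw [lintegral_finset_sum _ (fun k _ =>
      Measurable.indicator (f := fun ν' => ENNReal.ofReal (z ^ k) * ENNReal.ofReal (W ν'))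
        (measurable_const.mul hWm.ennreal_ofReal) (hEkm k))]
    refine Finset.sum_congr rfl fun k _ => ?_
    rw [lintegral_indicator (hEkm k), lintegral_const_mul _ hWm.ennreal_ofReal]
  have hFgood : ∀ (z : ℝ) (ν : Measure X) (k₀ : ℕ), k₀ ≤ K → ν A = (k₀ : ℝ≥0∞) →
      F z ν = ENNReal.ofReal (z ^ k₀) * ENNReal.ofReal (W ν) := by
    intro z ν k₀ hk₀K hk₀
    rw [show F z ν = ∑ k ∈ Finset.range (K + 1),
        (Ek k).indicator (fun ν' => ENNReal.ofReal (z ^ k) * ENNReal.ofReal (W ν')) ν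
      from rfl]
    rw [Finset.sum_eq_single k₀]
    · rw [Set.indicator_of_mem (show ν ∈ Ek k₀ from hk₀)]
    · intro k _ hkne
      refine Set.indicator_of_notMem (fun hmem => hkne ?_) _
      have h9 : ((k : ℕ) : ℝ≥0∞) = ((k₀ : ℕ) : ℝ≥0∞) := (hmem : ν A = _).symm.trans hk₀
      exact_mod_cast h9
    · intro hk₀mem
      exact absurd (Finset.mem_range.2 (Nat.lt_succ_of_le hk₀K)) hk₀mem
  -- the thinning Laplace transform at the test functions w_z
  set z0 : ℝ := Real.exp (-Cg) with hz0def
  have hz0pos : 0 < z0 := Real.exp_pos _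
  set β : ℕ → ℝ := fun n => Real.exp (g (e n) - f (e n)) with hβ
  have hβpos : ∀ n, 0 < β n := fun n => Real.exp_pos _
  have hβle : ∀ n ∈ I, ∀ z : ℝ, 0 < z → z ≤ z0 → β n * z ≤ 1 := by
    intro n hn z hz1 hz2
    have h1 : β n ≤ Real.exp Cg := by
      refine Real.exp_le_exp.2 ?_
      have h8 := hCg (e n); have h9 := hf.2.1 (e n); linarith
    calc β n * z ≤ Real.exp Cg * z0 :=
          mul_le_mul h1 hz2 (le_of_lt hz1) (Real.exp_nonneg _)
      _ = 1 := by rw [hz0def, ← Real.exp_add]; simp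
  have hfacpos : ∀ (n : ℕ) (z : ℝ), 0 < z → 0 < 1 - q + q * (β n * z) := by
    intro n z hz
    have h1 := hβpos n
    nlinarith [mul_pos hq0 (mul_pos h1 hz)]
  have hlapz : ∀ z : ℝ, 0 < z → z ≤ z0 →
      ∑ k ∈ Finset.range (K + 1), ENNReal.ofReal (z ^ k) * c k
        = ENNReal.ofReal (∏ n ∈ I, (1 - q + q * (β n * z))) := by
    intro z hzpos hzle
    set w : X → ℝ := A.indicator (fun x => f x - g x - Real.log z) with hwdef
    have hlogz : Real.log z ≤ -Cg := by
      calc Real.log z ≤ Real.log z0 := Real.log_le_log hzpos hzle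
        _ = -Cg := Real.log_exp _
    have hwnn : ∀ x, 0 ≤ w x := by
      intro x; by_cases hx : x ∈ A
      · rw [hwdef, Set.indicator_of_mem hx]
        have h8 := hCg x; have h9 := hf.2.1 x; linarith
      · rw [hwdef, Set.indicator_of_notMem hx]
    have hwm : Measurable w := ((hf.1.sub hg.1).sub measurable_const).indicator hA
    have hwmemU : MemU w := by
      refine ⟨hwm, hwnn, ⟨Cf - Real.log z, fun x => ?_⟩, ?_⟩
      · by_cases hx : x ∈ A
        · rw [hwdef, Set.indicator_of_mem hx]
          have h8 := hCf x; have h9 := hg.2.1 x; linarith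
        · rw [hwdef, Set.indicator_of_notMem hx]
          have h8 := hCf x; have h9 := hf.2.1 x; linarith
      · exact hAb.subset (hwdef ▸ Set.support_indicator_subset)
    have hlap := hTlap w hwmemU
    -- identify the integrand of the Laplace transform
    have hpairw : ∀ᵐ ν ∂T', expNeg (pairing w ν) = F z ν := by
      filter_upwards [hgood] with ν hν
      obtain ⟨k₀, hk₀, hk₀K⟩ := hν.1
      have hPfν := hν.2.1
      have hPgν := hν.2.2.1
      have hνAfin : ν A ≠ ⊤ := by rw [hk₀]; simp
      have hptw : ∀ x, ENNReal.ofReal (w x) + ENNReal.ofReal (g x)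
          = ENNReal.ofReal (f x) + ENNReal.ofReal (-Real.log z) * A.indicator 1 x := by
        intro x; by_cases hx : x ∈ A
        · rw [Set.indicator_of_mem hx, Pi.one_apply, mul_one,
            ← ENNReal.ofReal_add (hwnn x) (hg.2.1 x),
            ← ENNReal.ofReal_add (hf.2.1 x) (by linarith : (0:ℝ) ≤ -Real.log z)]
          congr 1
          rw [hwdef, Set.indicator_of_mem hx]; ring
        · rw [Set.indicator_of_notMem hx, hwdef, Set.indicator_of_notMem hx,
            hfA x hx, hgA x hx]
          simp
      have hsum : pairing w ν + pairing g ν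
          = pairing f ν + ENNReal.ofReal (-Real.log z) * ν A := by
        calc pairing w ν + pairing g ν
            = ∫⁻ x, (ENNReal.ofReal (w x) + ENNReal.ofReal (g x)) ∂ν :=
              (lintegral_add_left hwm.ennreal_ofReal _).symm
          _ = ∫⁻ x, (ENNReal.ofReal (f x)
                + ENNReal.ofReal (-Real.log z) * A.indicator 1 x) ∂ν :=
              lintegral_congr hptw
          _ = pairing f ν + ENNReal.ofReal (-Real.log z) * ν A := by
              rw [lintegral_add_left hf.1.ennreal_ofReal,
                lintegral_const_mul _ (measurable_one.indicator hA),
                lintegral_indicator_one hA]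
              rfl
      have hfinsum : pairing f ν + ENNReal.ofReal (-Real.log z) * ν A ≠ ⊤ :=
        ENNReal.add_ne_top.2 ⟨hPfν, ENNReal.mul_ne_top ENNReal.ofReal_ne_top hνAfin⟩
      have hwval : pairing w ν
          = pairing f ν + ENNReal.ofReal (-Real.log z) * ν A - pairing g ν :=
        (ENNReal.sub_eq_of_eq_add hPgν hsum.symm).symm
      have hwfin : pairing w ν ≠ ⊤ := by
        rw [hwval]; exact ne_top_of_le_ne_top hfinsum tsub_le_self
      rw [expNeg_of_ne_top hwfin, hFgood z ν k₀ hk₀K hk₀]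
      have htr : (pairing w ν).toReal
          = (pairing f ν).toReal + (-Real.log z) * k₀ - (pairing g ν).toReal := by
        have h7 : (pairing w ν).toReal + (pairing g ν).toReal
            = (pairing f ν).toReal + (-Real.log z) * k₀ := by
          rw [← ENNReal.toReal_add hwfin hPgν, hsum,
            ENNReal.toReal_add hPfν (ENNReal.mul_ne_top ENNReal.ofReal_ne_top hνAfin),
            ENNReal.toReal_mul, ENNReal.toReal_ofReal (by linarith : (0:ℝ) ≤ -Real.log z),
            hk₀]
          simp
        linarith
      rw [htr, ← ENNReal.ofReal_mul (pow_nonneg hzpos.le k₀)]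
      congr 1
      have hzk : z ^ k₀ = Real.exp ((k₀ : ℝ) * Real.log z) := by
        rw [Real.exp_nat_mul, Real.exp_log hzpos]
      rw [hzk]
      show Real.exp _ = Real.exp _ * Real.exp _
      rw [← Real.exp_add]
      congr 1
      ring
    -- the μ-side of the Laplace identity
    have hwval2 : ∀ n ∈ I, Real.exp (-(w (e n))) = β n * z := by
      intro n hn
      rw [hwdef, Set.indicator_of_mem (heI n hn).2]
      show Real.exp (-(f (e n) - g (e n) - Real.log z)) = β n * z
      rw [show -(f (e n) - g (e n) - Real.log z) = (g (e n) - f (e n)) + Real.log z by ring,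
        Real.exp_add, Real.exp_log hzpos]
    have hinner : ∫⁻ x, ENNReal.ofReal (-Real.log (1 - q + q * Real.exp (-w x))) ∂μ
        = ∑ n ∈ I, ENNReal.ofReal (-Real.log (1 - q + q * (β n * z))) := by
      rw [hint' _ (show Measurable fun x => -Real.log (1 - q + q * Real.exp (-w x)) from
          (((hwm.neg.exp).const_mul q).const_add (1 - q)).log.neg).ennreal_ofReal
        (fun x hx => by
          rw [hwdef, Set.indicator_of_notMem hx]
          simp)]
      exact Finset.sum_congr rfl fun n hn => by rw [hwval2 n hn]
    have hfacle1 : ∀ n ∈ I, 1 - q + q * (β n * z) ≤ 1 := by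
      intro n hn
      have := hβle n hn z hzpos hzle
      nlinarith
    have hterm : ∀ n ∈ I,
        expNeg (ENNReal.ofReal (-Real.log (1 - q + q * (β n * z))))
          = ENNReal.ofReal (1 - q + q * (β n * z)) := by
      intro n hn
      rw [expNeg_of_ne_top ENNReal.ofReal_ne_top,
        ENNReal.toReal_ofReal (neg_nonneg.2 (Real.log_nonpos
          (le_of_lt (hfacpos n z hzpos)) (hfacle1 n hn))),
        neg_neg, Real.exp_log (hfacpos n z hzpos)]
    calc ∑ k ∈ Finset.range (K + 1), ENNReal.ofReal (z ^ k) * c k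
        = ∫⁻ ν, F z ν ∂T' := (hFsplit z).symm
      _ = ∫⁻ ν, expNeg (pairing w ν) ∂T' := (lintegral_congr_ae hpairw).symm
      _ = expNeg (∫⁻ x, ENNReal.ofReal (-Real.log (1 - q + q * Real.exp (-w x))) ∂μ) := hlap
      _ = expNeg (∑ n ∈ I, ENNReal.ofReal (-Real.log (1 - q + q * (β n * z)))) := by
          rw [hinner]
      _ = ∏ n ∈ I, expNeg (ENNReal.ofReal (-Real.log (1 - q + q * (β n * z)))) :=
          expNeg_sum _ _
      _ = ∏ n ∈ I, ENNReal.ofReal (1 - q + q * (β n * z)) :=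
          Finset.prod_congr rfl hterm
      _ = ENNReal.ofReal (∏ n ∈ I, (1 - q + q * (β n * z))) :=
          (ENNReal.ofReal_prod_of_nonneg fun n _ => le_of_lt (hfacpos n z hzpos)).symm
  -- polynomial identification
  set p : Polynomial ℝ :=
    ∑ k ∈ Finset.range (K + 1), Polynomial.C ((c k).toReal) * Polynomial.X ^ k with hp
  set r : Polynomial ℝ :=
    ∏ n ∈ I, (Polynomial.C (1 - q) + Polynomial.C (q * β n) * Polynomial.X) with hr
  have hpeval : ∀ z : ℝ, p.eval z = ∑ k ∈ Finset.range (K + 1), (c k).toReal * z ^ k := by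
    intro z; rw [hp, Polynomial.eval_finset_sum]; simp
  have hreval : ∀ z : ℝ, r.eval z = ∏ n ∈ I, (1 - q + q * (β n * z)) := by
    intro z; rw [hr, Polynomial.eval_prod]
    refine Finset.prod_congr rfl fun n _ => ?_
    simp [mul_assoc]
  have hpr : p = r := by
    refine Polynomial.eq_of_infinite_eval_eq p r ?_
    refine Set.Infinite.mono ?_ (Set.infinite_coe_iff.1 (Set.Ioc.infinite hz0pos))
    intro z hz
    have h := hlapz z hz.1 hz.2
    have h' := congrArg ENNReal.toReal h
    rw [ENNReal.toReal_sum
      (fun k _ => ENNReal.mul_ne_top ENNReal.ofReal_ne_top (hcfin k))] at h'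
    rw [ENNReal.toReal_ofReal
      (Finset.prod_nonneg fun n _ => le_of_lt (hfacpos n z hz.1))] at h'
    have h'' : ∑ k ∈ Finset.range (K + 1), (c k).toReal * z ^ k
        = ∏ n ∈ I, (1 - q + q * (β n * z)) := by
      rw [← h']
      refine Finset.sum_congr rfl fun k _ => ?_
      rw [ENNReal.toReal_mul, ENNReal.toReal_ofReal (pow_nonneg hz.1.le k)]
      ring
    show p.eval z = r.eval z
    rw [hpeval, hreval, h'']
  have hsum1 : ∑ k ∈ Finset.range (K + 1), (c k).toReal = ∏ n ∈ I, (1 - q + q * β n) := by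
    have h := congrArg (Polynomial.eval 1) hpr
    rw [hpeval, hreval] at h
    simpa using h
  -- values of pairings against μ
  set sg : ℝ := ∑ n ∈ I, g (e n) with hsg
  have hsgnn : 0 ≤ sg := Finset.sum_nonneg fun n _ => hg.2.1 _
  have hpgμ : pairing g μ = ENNReal.ofReal sg := by
    rw [show pairing g μ = ∫⁻ x, ENNReal.ofReal (g x) ∂μ from rfl,
      hint' _ hg.1.ennreal_ofReal (fun x hx => by rw [hgA x hx]; simp),
      hsg, ENNReal.ofReal_sum_of_nonneg (fun n _ => hg.2.1 _)]
  -- left-hand side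
  have hLae : (fun ν => expNeg (pairing f ν) * expNeg (pairing g (μ - ν))) =ᵐ[T']
      fun ν => ENNReal.ofReal (Real.exp (-sg)) * ENNReal.ofReal (W ν) := by
    filter_upwards [hgood] with ν hν
    obtain ⟨-, hPfν, hPgν, -, hPgle, hsubν⟩ := hν
    rw [hsubν, hpgμ]
    have hle : pairing g ν ≤ ENNReal.ofReal sg := hpgμ ▸ hPgle
    have hfin2 : ENNReal.ofReal sg - pairing g ν ≠ ⊤ :=
      ne_top_of_le_ne_top ENNReal.ofReal_ne_top tsub_le_self
    rw [expNeg_of_ne_top hPfν, expNeg_of_ne_top hfin2,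
      ENNReal.toReal_sub_of_le hle ENNReal.ofReal_ne_top,
      ENNReal.toReal_ofReal hsgnn,
      ← ENNReal.ofReal_mul (Real.exp_nonneg _), ← ENNReal.ofReal_mul (Real.exp_nonneg _)]
    congr 1
    show Real.exp _ * Real.exp _ = Real.exp _ * Real.exp _
    rw [← Real.exp_add, ← Real.exp_add]
    congr 1
    ring
  have hWone : ∫⁻ ν, ENNReal.ofReal (W ν) ∂T' = ∑ k ∈ Finset.range (K + 1), c k := by
    have hae1 : (fun ν => ENNReal.ofReal (W ν)) =ᵐ[T'] F 1 := by
      filter_upwards [hgood] with ν hν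
      obtain ⟨k₀, hk₀, hk₀K⟩ := hν.1
      rw [hFgood 1 ν k₀ hk₀K hk₀, one_pow, ENNReal.ofReal_one, one_mul]
    rw [lintegral_congr_ae hae1, hFsplit 1]
    refine Finset.sum_congr rfl fun k _ => ?_
    rw [one_pow, ENNReal.ofReal_one, one_mul]
  have hLHS : ∫⁻ ν, expNeg (pairing f ν) * expNeg (pairing g (μ - ν)) ∂T'
      = ENNReal.ofReal (Real.exp (-sg))
          * ENNReal.ofReal (∏ n ∈ I, (1 - q + q * β n)) := by
    rw [lintegral_congr_ae hLae, lintegral_const_mul _ hWm.ennreal_ofReal, hWone,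
      show ∑ k ∈ Finset.range (K + 1), c k
          = ENNReal.ofReal (∑ k ∈ Finset.range (K + 1), (c k).toReal) from by
        rw [ENNReal.ofReal_sum_of_nonneg (fun _ _ => ENNReal.toReal_nonneg)]
        exact Finset.sum_congr rfl fun k _ => (ENNReal.ofReal_toReal (hcfin k)).symm,
      hsum1]
  -- right-hand side
  have hRHS : expNeg (pairing (vOf q f g) μ)
      = ENNReal.ofReal (Real.exp (-sg))
          * ENNReal.ofReal (∏ n ∈ I, (1 - q + q * β n)) := by
    have hvμ : pairing (vOf q f g) μ = ENNReal.ofReal (∑ n ∈ I, vOf q f g (e n)) := by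
      rw [show pairing (vOf q f g) μ = ∫⁻ x, ENNReal.ofReal (vOf q f g x) ∂μ from rfl,
        hint' _ (vOf_measurable hf.1 hg.1).ennreal_ofReal
          (fun x hx => by rw [vOf_zero (hfA x hx) (hgA x hx)]; simp),
        ENNReal.ofReal_sum_of_nonneg (fun n _ => vOf_nonneg hq0 hq1 hf.2.1 hg.2.1 _)]
    rw [hvμ, expNeg_of_ne_top ENNReal.ofReal_ne_top,
      ENNReal.toReal_ofReal (Finset.sum_nonneg fun n _ =>
        vOf_nonneg hq0 hq1 hf.2.1 hg.2.1 _),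
      ← ENNReal.ofReal_mul (Real.exp_nonneg _)]
    congr 1
    have hfac : ∀ n ∈ I, Real.exp (-(vOf q f g (e n)))
        = Real.exp (-(g (e n))) * (1 - q + q * β n) := by
      intro n hn
      rw [show vOf q f g (e n)
          = -Real.log ((1 - q) * Real.exp (-(g (e n))) + q * Real.exp (-(f (e n)))) from rfl,
        neg_neg, Real.exp_log (vArg_pos hq0 hq1), vArg_factor]
    calc Real.exp (-(∑ n ∈ I, vOf q f g (e n)))
        = Real.exp (∑ n ∈ I, -(vOf q f g (e n))) := by rw [← Finset.sum_neg_distrib]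
      _ = ∏ n ∈ I, Real.exp (-(vOf q f g (e n))) := Real.exp_sum _ _
      _ = ∏ n ∈ I, (Real.exp (-(g (e n))) * (1 - q + q * β n)) :=
          Finset.prod_congr rfl hfac
      _ = (∏ n ∈ I, Real.exp (-(g (e n)))) * ∏ n ∈ I, (1 - q + q * β n) :=
          Finset.prod_mul_distrib
      _ = Real.exp (-sg) * ∏ n ∈ I, (1 - q + q * β n) := by
          rw [← Real.exp_sum, hsg, ← Finset.sum_neg_distrib]
  rw [hLHS, hRHS]

end KeyFin

section MainHelpers

open Filter Topology PoissonSplitting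

lemma pairing_sup_of_trunc {X : Type*} [MeasurableSpace X] {f : X → ℝ}
    {fn : ℕ → X → ℝ} (hm : ∀ n, Measurable (fn n))
    (hmono : ∀ x, Monotone fun n => fn n x) (hle : ∀ n x, fn n x ≤ f x)
    (hev : ∀ x, ∀ᶠ n in atTop, fn n x = f x) (m : Measure X) :
    Monotone (fun n => pairing (fn n) m) ∧ (⨆ n, pairing (fn n) m) = pairing f m := by
  have hmono' : Monotone fun n => (fun x => ENNReal.ofReal (fn n x)) := by
    intro a b hab x
    exact ENNReal.ofReal_le_ofReal (hmono x hab)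
  constructor
  · intro a b hab
    exact lintegral_mono fun x => ENNReal.ofReal_le_ofReal (hmono x hab)
  · have hpt : ∀ x, (⨆ n, ENNReal.ofReal (fn n x)) = ENNReal.ofReal (f x) := by
      intro x
      refine le_antisymm (iSup_le fun n => ENNReal.ofReal_le_ofReal (hle n x)) ?_
      obtain ⟨n, hn⟩ := (hev x).exists
      exact le_trans (le_of_eq (congrArg ENNReal.ofReal hn).symm)
        (le_iSup (fun n => ENNReal.ofReal (fn n x)) n)
    calc (⨆ n, pairing (fn n) m)
        = ∫⁻ x, ⨆ n, ENNReal.ofReal (fn n x) ∂m :=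
          (lintegral_iSup (fun n => (hm n).ennreal_ofReal) hmono').symm
      _ = pairing f m := lintegral_congr hpt

lemma tendsto_expNeg_pairing_trunc {X : Type*} [MeasurableSpace X] {f : X → ℝ}
    {fn : ℕ → X → ℝ} (hm : ∀ n, Measurable (fn n))
    (hmono : ∀ x, Monotone fun n => fn n x) (hle : ∀ n x, fn n x ≤ f x)
    (hev : ∀ x, ∀ᶠ n in atTop, fn n x = f x) (m : Measure X) :
    Tendsto (fun n => expNeg (pairing (fn n) m)) atTop (𝓝 (expNeg (pairing f m))) := by
  obtain ⟨h1, h2⟩ := pairing_sup_of_trunc hm hmono hle hev m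
  have := tendsto_expNeg_iSup h1
  rwa [h2] at this

end MainHelpers

open Filter Topology

/-- The splitting law of the Poisson point process `Π_ϱ`, evaluated on the exponential
test function `e^{-ζ_f} ⊗ e^{-ζ_g}`, equals the single Laplace transform `L_{Π_ϱ}(v)`,
where `v = g - log(1-q+q e^{g-f}) = -log((1-q) e^{-g} + q e^{-f}) ∈ U`. -/
theorem statement16 {X : Type*} [MeasurableSpace X] [MetricSpace X] [PolishSpace X]
    [BorelSpace X] (ϱ : Measure X) (hϱ : IsLocallyFiniteMeasure ϱ)
    (q : ℝ) (hq : q ∈ Set.Ioo (0 : ℝ) 1)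
    (f g : X → ℝ) (hf : MemU f) (hg : MemU g)
    (Pϱ : Measure (Measure X)) (hPϱ : IsPoissonPP ϱ Pϱ)
    (T : Measure X → Measure (Measure X)) (hTm : Measurable T)
    (hT : ∀ μ, IsPointMeasure μ → IsThinning q μ (T μ))
    (S : Measure (Measure X × Measure X))
    (hS : ∀ h : Measure X × Measure X → ℝ≥0∞, Measurable h →
      ∫⁻ p, h p ∂S = ∫⁻ μ, ∫⁻ ν, h (ν, μ - ν) ∂(T μ) ∂Pϱ)
    (v : X → ℝ)
    (hv : ∀ x, v x = -Real.log ((1 - q) * Real.exp (-g x) + q * Real.exp (-f x))) :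
    (∀ x, v x = g x - Real.log (1 - q + q * Real.exp (g x - f x)))
      ∧ MemU v
      ∧ ∫⁻ p, expNeg (pairing f p.1) * expNeg (pairing g p.2) ∂S = laplaceT Pϱ v := by
  obtain ⟨hq0, hq1⟩ := hq
  have hveq : v = vOf q f g := funext hv
  refine ⟨fun x => by rw [hv x, vOf_eq_alt hq0 hq1], by rw [hveq]; exact memU_vOf hq0 hq1 hf hg, ?_⟩
  haveI hPprob : IsProbabilityMeasure Pϱ := hPϱ.1
  haveI : SigmaFinite ϱ := inferInstance
  -- truncation sets
  set Aset : ℕ → Set X := fun n =>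
    ((f ⁻¹' Set.Ici (1 / (n + 1 : ℝ)) ∪ g ⁻¹' Set.Ici (1 / (n + 1 : ℝ)))
      ∩ spanningSets ϱ n) with hAset
  have hAmeas : ∀ n, MeasurableSet (Aset n) :=
    fun n => ((hf.1 measurableSet_Ici).union (hg.1 measurableSet_Ici)).inter
      (measurableSet_spanningSets ϱ n)
  have hdivmono : ∀ a b : ℕ, a ≤ b → (1 : ℝ) / (b + 1) ≤ 1 / (a + 1) := by
    intro a b hab
    apply one_div_le_one_div_of_le (by positivity)
    have : (a : ℝ) ≤ b := Nat.cast_le.2 hab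
    linarith
  have hAmono : Monotone Aset := by
    intro a b hab
    refine Set.inter_subset_inter (Set.union_subset_union ?_ ?_)
      (monotone_spanningSets ϱ hab)
    · intro x hx
      simp only [Set.mem_preimage, Set.mem_Ici] at hx ⊢
      exact le_trans (hdivmono a b hab) hx
    · intro x hx
      simp only [Set.mem_preimage, Set.mem_Ici] at hx ⊢
      exact le_trans (hdivmono a b hab) hx
  have hAbdd : ∀ n, Bornology.IsBounded (Aset n) := by
    intro n
    refine (hf.2.2.2.union hg.2.2.2).subset ?_
    intro x hx
    have hpos : (0:ℝ) < 1 / (n + 1 : ℝ) := by positivity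
    rcases hx.1 with h | h
    · left
      refine Function.mem_support.2 fun h0 => ?_
      simp only [Set.mem_preimage, Set.mem_Ici] at h
      rw [h0] at h; linarith
    · right
      refine Function.mem_support.2 fun h0 => ?_
      simp only [Set.mem_preimage, Set.mem_Ici] at h
      rw [h0] at h; linarith
  have hAρ : ∀ n, ϱ (Aset n) ≠ ⊤ := fun n =>
    ((measure_mono Set.inter_subset_right).trans_lt (measure_spanningSets_lt_top ϱ n)).ne
  -- truncated functions
  set fn : ℕ → X → ℝ := fun n => (Aset n).indicator f with hfn
  set gn : ℕ → X → ℝ := fun n => (Aset n).indicator g with hgn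
  have hfnU : ∀ n, MemU (fn n) := fun n => hf.indicator (hAmeas n)
  have hgnU : ∀ n, MemU (gn n) := fun n => hg.indicator (hAmeas n)
  have hindmono : ∀ (h : X → ℝ), (∀ x, 0 ≤ h x) → ∀ x, Monotone fun n =>
      (Aset n).indicator h x := by
    intro h h0 x a b hab
    show (Aset a).indicator h x ≤ (Aset b).indicator h x
    by_cases hx : x ∈ Aset a
    · have h1 : (Aset a).indicator h x = h x := Set.indicator_of_mem hx h
      have h2 : (Aset b).indicator h x = h x := Set.indicator_of_mem (hAmono hab hx) h
      rw [h1, h2]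
    · have h1 : (Aset a).indicator h x = 0 := Set.indicator_of_notMem hx h
      rw [h1]
      exact Set.indicator_nonneg (fun y _ => h0 y) x
  have hfnmono : ∀ x, Monotone fun n => fn n x := hindmono f hf.2.1
  have hgnmono : ∀ x, Monotone fun n => gn n x := hindmono g hg.2.1
  have hfnle : ∀ n x, fn n x ≤ f x := fun n x =>
    Set.indicator_le_self' (fun y _ => hf.2.1 y) x
  have hgnle : ∀ n x, gn n x ≤ g x := fun n x =>
    Set.indicator_le_self' (fun y _ => hg.2.1 y) x
  have hspan : ∀ x : X, ∀ᶠ n in atTop, x ∈ spanningSets ϱ n := by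
    intro x
    have hx : x ∈ ⋃ n, spanningSets ϱ n := by
      rw [iUnion_spanningSets]; trivial
    obtain ⟨m, hm⟩ := Set.mem_iUnion.1 hx
    exact eventually_atTop.2 ⟨m, fun n hn => Set.mem_of_subset_of_mem (monotone_spanningSets ϱ hn) hm⟩
  have hindev : ∀ (h : X → ℝ), (∀ x, 0 ≤ h x) →
      (∀ x, h x ≠ 0 → ∀ᶠ n : ℕ in atTop, x ∈ f ⁻¹' Set.Ici (1 / (n + 1 : ℝ))
        ∪ g ⁻¹' Set.Ici (1 / (n + 1 : ℝ))) →
      ∀ x, ∀ᶠ n in atTop, (Aset n).indicator h x = h x := by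
    intro h h0 hev x
    by_cases hx : h x = 0
    · refine Eventually.of_forall fun n => ?_
      by_cases hxn : x ∈ Aset n
      · rw [Set.indicator_of_mem hxn]
      · rw [Set.indicator_of_notMem hxn, hx]
    · filter_upwards [hev x hx, hspan x] with n h1 h2
      exact Set.indicator_of_mem (Set.mem_inter h1 h2) h
  have hfev' : ∀ x : X, f x ≠ 0 → ∀ᶠ n : ℕ in atTop,
      x ∈ f ⁻¹' Set.Ici (1 / (n + 1 : ℝ)) ∪ g ⁻¹' Set.Ici (1 / (n + 1 : ℝ)) := by
    intro x hx
    have hxpos : 0 < f x := lt_of_le_of_ne (hf.2.1 x) (Ne.symm hx)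
    obtain ⟨N, hN⟩ := exists_nat_one_div_lt hxpos
    refine eventually_atTop.2 ⟨N, fun n hn => Set.mem_union_left _ ?_⟩
    simp only [Set.mem_preimage, Set.mem_Ici]
    calc (1:ℝ) / (n + 1) ≤ 1 / (N + 1) := hdivmono N n hn
      _ ≤ f x := hN.le
  have hgev' : ∀ x : X, g x ≠ 0 → ∀ᶠ n : ℕ in atTop,
      x ∈ f ⁻¹' Set.Ici (1 / (n + 1 : ℝ)) ∪ g ⁻¹' Set.Ici (1 / (n + 1 : ℝ)) := by
    intro x hx
    have hxpos : 0 < g x := lt_of_le_of_ne (hg.2.1 x) (Ne.symm hx)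
    obtain ⟨N, hN⟩ := exists_nat_one_div_lt hxpos
    refine eventually_atTop.2 ⟨N, fun n hn => Set.mem_union_right _ ?_⟩
    simp only [Set.mem_preimage, Set.mem_Ici]
    calc (1:ℝ) / (n + 1) ≤ 1 / (N + 1) := hdivmono N n hn
      _ ≤ g x := hN.le
  have hfnev : ∀ x, ∀ᶠ n in atTop, fn n x = f x := hindev f hf.2.1 hfev'
  have hgnev : ∀ x, ∀ᶠ n in atTop, gn n x = g x := hindev g hg.2.1 hgev'
  -- the truncated v's
  set vn : ℕ → X → ℝ := fun n => vOf q (fn n) (gn n) with hvn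
  have hvnm : ∀ n, Measurable (vn n) := fun n => vOf_measurable (hfnU n).1 (hgnU n).1
  have hvnmono : ∀ x, Monotone fun n => vn n x := by
    intro x a b hab
    exact vOf_mono hq0 hq1 (hfnmono x hab) (hgnmono x hab)
  have hvnle : ∀ n x, vn n x ≤ vOf q f g x := fun n x =>
    vOf_mono hq0 hq1 (hfnle n x) (hgnle n x)
  have hvnev : ∀ x, ∀ᶠ n in atTop, vn n x = vOf q f g x := by
    intro x
    filter_upwards [hfnev x, hgnev x] with n h1 h2
    rw [hvn]
    show vOf q (fn n) (gn n) x = vOf q f g x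
    simp only [vOf, h1, h2]
  -- total mass of S
  have hTuniv : ∀ᵐ μ ∂Pϱ, (T μ) Set.univ = 1 := by
    filter_upwards [hPϱ.2.1] with μ hμ
    exact (hT μ hμ).1.measure_univ
  have hSone : ∫⁻ _, (1:ℝ≥0∞) ∂S = 1 := by
    rw [hS (fun _ => 1) measurable_const]
    calc ∫⁻ μ, ∫⁻ _, 1 ∂(T μ) ∂Pϱ = ∫⁻ μ, 1 ∂Pϱ := by
          refine lintegral_congr_ae ?_
          filter_upwards [hTuniv] with μ h
          rw [lintegral_one, h]
      _ = 1 := by rw [lintegral_one, measure_univ]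
  -- the identity at level n
  have hEn : ∀ n, ∫⁻ p, expNeg (pairing (fn n) p.1) * expNeg (pairing (gn n) p.2) ∂S
      = ∫⁻ μ, expNeg (pairing (vn n) μ) ∂Pϱ := by
    intro n
    have hmeas : Measurable fun p : Measure X × Measure X =>
        expNeg (pairing (fn n) p.1) * expNeg (pairing (gn n) p.2) :=
      (measurable_expNeg.comp ((measurable_pairing (hfnU n).1).comp measurable_fst)).mul
        (measurable_expNeg.comp ((measurable_pairing (hgnU n).1).comp measurable_snd))
    rw [hS _ hmeas]
    refine lintegral_congr_ae ?_
    filter_upwards [hPϱ.2.1, poisson_ae_finite hPϱ (hAmeas n) (hAbdd n) (hAρ n)]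
      with μ hpm hfin
    exact key_fin hq0 hq1 (hfnU n) (hgnU n) (hAmeas n) (hAbdd n)
      (fun x hx => Set.indicator_of_notMem hx f)
      (fun x hx => Set.indicator_of_notMem hx g)
      hpm hfin (hT μ hpm)
  -- limits on both sides
  have hL : Tendsto
      (fun n => ∫⁻ p, expNeg (pairing (fn n) p.1) * expNeg (pairing (gn n) p.2) ∂S)
      atTop (𝓝 (∫⁻ p, expNeg (pairing f p.1) * expNeg (pairing g p.2) ∂S)) := by
    refine tendsto_lintegral_of_dominated_convergence (fun _ => 1)
      (fun n => (measurable_expNeg.comp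
          ((measurable_pairing (hfnU n).1).comp measurable_fst)).mul
        (measurable_expNeg.comp ((measurable_pairing (hgnU n).1).comp measurable_snd)))
      (fun n => Eventually.of_forall fun p => mul_le_one' expNeg_le_one expNeg_le_one)
      (by rw [hSone]; exact one_ne_top)
      (Eventually.of_forall fun p => ?_)
    exact ENNReal.Tendsto.mul
      (tendsto_expNeg_pairing_trunc (fun n => (hfnU n).1) hfnmono hfnle hfnev p.1)
      (Or.inr expNeg_ne_top)
      (tendsto_expNeg_pairing_trunc (fun n => (hgnU n).1) hgnmono hgnle hgnev p.2)
      (Or.inr expNeg_ne_top)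
  have hR : Tendsto (fun n => ∫⁻ μ, expNeg (pairing (vn n) μ) ∂Pϱ)
      atTop (𝓝 (∫⁻ μ, expNeg (pairing (vOf q f g) μ) ∂Pϱ)) := by
    refine tendsto_lintegral_of_dominated_convergence (fun _ => 1)
      (fun n => measurable_expNeg.comp (measurable_pairing (hvnm n)))
      (fun n => Eventually.of_forall fun μ => expNeg_le_one)
      (by rw [lintegral_one, measure_univ]; exact one_ne_top)
      (Eventually.of_forall fun μ =>
        tendsto_expNeg_pairing_trunc hvnm hvnmono hvnle hvnev μ)
  have hfinal := tendsto_nhds_unique hL (hR.congr fun n => (hEn n).symm)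
  rw [hfinal, hveq]
  rfl
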